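/- For every integer ℓ ≥ 2, if G is a finite C_{ℓ+1}-free simple graph and v is any vertex of G, then the subgraph of G induced by the open neighbourhood N(v) is (ℓ−2)-degenerate. -/

import Mathlib

open SimpleGraph

/-- `σ` is a proper colouring of `G` with colours in `ℕ`. -/
def IsProperColoring {V : Type*} (G : SimpleGraph V) (σ : V → ℕ) : Prop :=
  ∀ ⦃u v : V⦄, G.Adj u v → σ u ≠ σ v

/-- The chromatic number of `G`, as a natural number. -/
noncomputable def chromNum {V : Type*} (G : SimpleGraph V) : ℕ :=
  sInf {n : ℕ | G.Colorable n}

/-- The discrepancy `φ_σ(G)` of a proper colouring `σ` of `G`: the maximum, over all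
induced subgraphs `G[S]` of `G`, of `|σ(S)| - χ(G[S])`. -/
noncomputable def colDisc {V : Type*} (G : SimpleGraph V) (σ : V → ℕ) : ℤ :=
  sSup {z : ℤ | ∃ S : Set V, z = ((σ '' S).ncard : ℤ) - (chromNum (G.induce S) : ℤ)}

/-- The chromatic discrepancy `φ(G)`: the minimum of `φ_σ(G)` over all proper
colourings `σ` of `G`. -/
noncomputable def chromDisc {V : Type*} (G : SimpleGraph V) : ℤ :=
  sInf {z : ℤ | ∃ σ : V → ℕ, IsProperColoring G σ ∧ z = colDisc G σ}

/-- `G` is locally `s`-colourable: the closed neighbourhood of every vertex induces an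
`s`-colourable subgraph. -/
def LocallyColorable {V : Type*} (G : SimpleGraph V) (s : ℕ) : Prop :=
  ∀ v : V, chromNum (G.induce (insert v (G.neighborSet v))) ≤ s

/-- The set of vertices at distance at most `r` from `v` in `G`. -/
def ballSet {V : Type*} (G : SimpleGraph V) (v : V) (r : ℕ) : Set V :=
  {u : V | ∃ w : G.Walk v u, w.length ≤ r}

/-- `G` is `r`-locally `s`-colourable: every ball of radius `r` induces an
`s`-colourable subgraph. -/
def RLocallyColorable {V : Type*} (G : SimpleGraph V) (r s : ℕ) : Prop :=
  ∀ v : V, chromNum (G.induce (ballSet G v r)) ≤ s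

/-- `G` contains no cycle of length exactly `n` as a (not necessarily induced) subgraph. -/
def CycleLenFree {V : Type*} (G : SimpleGraph V) (n : ℕ) : Prop :=
  ∀ (v : V) (w : G.Walk v v), w.IsCycle → w.length ≠ n

/-- `H` is `k`-degenerate: every non-empty (induced) subgraph contains a vertex of
degree at most `k` in it. -/
def Degenerate {α : Type*} (H : SimpleGraph α) (k : ℕ) : Prop :=
  ∀ S : Set α, S.Nonempty → ∃ a ∈ S, {b | b ∈ S ∧ H.Adj a b}.ncard ≤ k

/-- `G` is co-locally `s`-colourable: for all vertices `u ≠ v`,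
`χ(G[{u} ∪ N(v)]) ≤ s`. -/
def CoLocallyColorable {V : Type*} (G : SimpleGraph V) (s : ℕ) : Prop :=
  ∀ v u : V, u ≠ v → chromNum (G.induce (insert u (G.neighborSet v))) ≤ s

/-- The minimum of `χ(G[X])` over all subsets `X ⊆ V(G)` spanning exactly `p` colours
of `σ` (a rainbow cover of `σ` when `σ` uses exactly `p` colours). -/
noncomputable def minRainbowChrom {V : Type*} (G : SimpleGraph V) (σ : V → ℕ) (p : ℕ) : ℕ :=
  sInf {c : ℕ | ∃ X : Set V, (σ '' X).ncard = p ∧ c = chromNum (G.induce X)}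

/-- `f_G(p)`: the maximum, over all proper colourings `σ` of `G` using exactly `p`
colours, of the minimum chromatic number of a rainbow cover of `σ`. -/
noncomputable def fG {V : Type*} (G : SimpleGraph V) (p : ℕ) : ℕ :=
  sSup {m : ℕ | ∃ σ : V → ℕ, IsProperColoring G σ ∧ (σ '' Set.univ).ncard = p ∧
    m = minRainbowChrom G σ p}

/-- The closed neighbourhood `N[X]` of a set `X` of vertices. -/
def closedNbhd {V : Type*} (G : SimpleGraph V) (X : Set V) : Set V :=
  X ∪ {u : V | ∃ x ∈ X, G.Adj x u}

/-- For every integer `ℓ ≥ 2`, if `G` is a finite `C_{ℓ+1}`-free simple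
graph and `v` any vertex, then the subgraph induced by the open neighbourhood `N(v)`
is `(ℓ-2)`-degenerate. -/
theorem cycleFree_neighborhood_degenerate {V : Type*} [Fintype V]
    (ℓ : ℕ) (hℓ : 2 ≤ ℓ) (G : SimpleGraph V) (hc : CycleLenFree G (ℓ + 1)) (v : V) :
    Degenerate (G.induce (G.neighborSet v)) (ℓ - 2) := by
  classical
  by_contra h
  unfold Degenerate at h
  push_neg at h
  obtain ⟨S, hSne, hS⟩ := h
  set T : Set V := Subtype.val '' S with hT
  have hTsub : T ⊆ G.neighborSet v := by
    rintro _ ⟨⟨a, ha⟩, -, rfl⟩; exact ha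
  have hTne : T.Nonempty := hSne.image _
  have hdeg : ∀ x ∈ T, ℓ - 1 ≤ {b | b ∈ T ∧ G.Adj x b}.ncard := by
    rintro _ ⟨a, haS, rfl⟩
    have h1 := hS a haS
    have himg : Subtype.val '' {b | b ∈ S ∧ (G.induce (G.neighborSet v)).Adj a b}
        = {b | b ∈ T ∧ G.Adj (↑a) b} := by
      ext x
      constructor
      · rintro ⟨b, ⟨hbS, hadj⟩, rfl⟩
        exact ⟨⟨b, hbS, rfl⟩, hadj⟩
      · rintro ⟨⟨b, hbS, rfl⟩, hadj⟩
        exact ⟨b, ⟨hbS, hadj⟩, rfl⟩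
    rw [← himg, Set.ncard_image_of_injective _ Subtype.val_injective,
      show ℓ - 1 = (ℓ - 2) + 1 by omega]
    exact h1
  -- build paths of any length < ℓ inside T
  have key : ∀ n, n < ℓ → ∃ (x y : V) (q : G.Walk x y),
      q.IsPath ∧ q.length = n ∧ ∀ z ∈ q.support, z ∈ T := by
    intro n
    induction n with
    | zero =>
      intro _
      obtain ⟨x, hx⟩ := hTne
      exact ⟨x, x, Walk.nil, Walk.IsPath.nil, rfl, by simpa using hx⟩
    | succ n ih =>
      intro hn
      obtain ⟨x, y, q, hq, hqlen, hqT⟩ := ih (by omega)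
      have hxT : x ∈ T := hqT x q.start_mem_support
      -- find a fresh neighbor of x in T
      have hsupcard : (q.support.toFinset.erase x).card ≤ n := by
        have h1 : q.support.toFinset.card ≤ n + 1 := by
          have := q.support.toFinset_card_le
          rw [Walk.length_support, hqlen] at this
          omega
        have := Finset.card_erase_le (s := q.support.toFinset) (a := x)
        have h2 : x ∈ q.support.toFinset := by
          simpa using q.start_mem_support
        rw [Finset.card_erase_of_mem h2]
        omega
      have hnotsub : ¬ {b | b ∈ T ∧ G.Adj x b} ⊆ ↑(q.support.toFinset.erase x) := by
        intro hsub
        have := Set.ncard_le_ncard hsub (Set.toFinite _)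
        rw [Set.ncard_coe_finset] at this
        have := hdeg x hxT
        omega
      obtain ⟨z, ⟨hzT, hzadj⟩, hznot⟩ := Set.not_subset.mp hnotsub
      have hznotsup : z ∉ q.support := by
        intro hmem
        apply hznot
        simp only [Finset.coe_erase, Set.mem_diff, List.coe_toFinset, Set.mem_setOf_eq,
          Set.mem_singleton_iff]
        exact ⟨hmem, fun hzx => by subst hzx; exact G.irrefl hzadj⟩
      refine ⟨z, y, Walk.cons hzadj.symm q, ?_, by simp [hqlen], ?_⟩
      · rw [Walk.cons_isPath_iff]; exact ⟨hq, hznotsup⟩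
      · intro w hw
        rw [Walk.support_cons] at hw
        rcases List.mem_cons.mp hw with rfl | hw
        · exact hzT
        · exact hqT w hw
  -- path with ℓ vertices
  obtain ⟨x, y, q, hq, hqlen, hqT⟩ := key (ℓ - 1) (by omega)
  have hxy : x ≠ y := by
    intro hxy
    subst hxy
    have := hq.2
    have hnil : q.length = 0 := by
      cases q with
      | nil => rfl
      | cons h p =>
        exfalso
        rw [Walk.support_cons] at this
        exact (List.nodup_cons.mp this).1 p.end_mem_support
    omega
  have hvny : v ∉ q.support := by
    intro hmem
    have : v ∈ G.neighborSet v := hTsub (hqT v hmem)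
    exact G.irrefl this
  have hyv : G.Adj y v := (hTsub (hqT y q.end_mem_support)).symm
  have hvx : G.Adj v x := hTsub (hqT x q.start_mem_support)
  set p := q.concat hyv with hp
  have hpPath : p.IsPath := by
    rw [Walk.isPath_def, hp, Walk.support_concat, List.nodup_append]
    refine ⟨hq.2, List.nodup_singleton v, ?_⟩
    intro a ha b hav hab
    rw [List.mem_singleton] at hav
    exact hvny (hav ▸ hab ▸ ha)
  have hcyc : (Walk.cons hvx p).IsCycle := by
    rw [Walk.cons_isCycle_iff]
    refine ⟨hpPath, ?_⟩
    rw [hp, Walk.edges_concat, List.concat_eq_append, List.mem_append, List.mem_singleton]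
    rintro (hmem | heq)
    · exact hvny (q.fst_mem_support_of_mem_edges hmem)
    · rw [Sym2.eq_iff] at heq
      rcases heq with ⟨h1, h2⟩ | ⟨h1, h2⟩
      · exact G.irrefl (h2 ▸ hvx)
      · exact hxy h2
  exact hc v (Walk.cons hvx p) hcyc (by simp [hp, Walk.length_concat, hqlen]; omega)
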